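/- Let α, β be positive integers and let C be a (1+u,1+uv)-additive constacyclic code in R1^α × R2^β. Then the Gray image Φ(C) is invariant under the block-shift permutation σ, and Φ is distance invariant on C: for all c, c' ∈ C, the Hamming distance between Φ(c) and Φ(c') equals the Lee distance d_L(c,c') = w_L(c − c'). -/

import Mathlib

open TrivSqZeroExt Finset

set_option synthInstance.maxHeartbeats 1000000
set_option maxHeartbeats 2000000

noncomputable section

/-- `Z2` is the field with two elements. -/
abbrev Z2 := ZMod 2

/-- `R1 = Z2[u] = Z2 + uZ2` with `u² = 0`. -/
abbrev R1 := DualNumber Z2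

/-- `R2 = Z2[u,v] = Z2 + uZ2 + vZ2 + uvZ2` with `u² = v² = 0`, `uv = vu`,
realized as dual numbers over `R1`. -/
abbrev R2 := DualNumber R1

/-- The element `u` of `R1`. -/
def u1 : R1 := DualNumber.eps

/-- The inclusion of `Z2` into `R1`. -/
def ofZ2R1 (a : Z2) : R1 := TrivSqZeroExt.inl a

/-- The element `u` of `R2`. -/
def uu : R2 := TrivSqZeroExt.inl DualNumber.eps

/-- The element `v` of `R2`. -/
def vv : R2 := DualNumber.eps

/-- The inclusion of `Z2` into `R2`. -/
def ofZ2R2 (a : Z2) : R2 := TrivSqZeroExt.inl (TrivSqZeroExt.inl a)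

/-- `η : R2 → R1`, `a + ub + vc + uvd ↦ a + ub` (reduction modulo `v`),
as a ring homomorphism. -/
def eta : R2 →+* R1 where
  toFun := TrivSqZeroExt.fst
  map_one' := rfl
  map_mul' := TrivSqZeroExt.fst_mul
  map_zero' := rfl
  map_add' := TrivSqZeroExt.fst_add

/-- The ambient space `R1^α × R2^β`. -/
abbrev V (α β : ℕ) := (Fin α → R1) × (Fin β → R2)

/-- The scalar multiplication of `R2` on `R1^α × R2^β`:
`l • (a₀,…,a_{α-1},b₀,…,b_{β-1}) = (η(l)a₀,…,η(l)a_{α-1}, lb₀,…,lb_{β-1})`. -/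
instance instSMulV (α β : ℕ) : SMul R2 (V α β) :=
  ⟨fun l w => (fun i => eta l * w.1 i, fun j => l * w.2 j)⟩

lemma smulV_def {α β : ℕ} (l : R2) (w : V α β) :
    l • w = (fun i => eta l * w.1 i, fun j => l * w.2 j) := rfl

instance instMulActionV (α β : ℕ) : MulAction R2 (V α β) where
  one_smul w := by
    refine Prod.ext (funext fun i => ?_) (funext fun j => ?_)
    · show eta 1 * w.1 i = w.1 i; simp
    · show (1 : R2) * w.2 j = w.2 j; simp
  mul_smul l l' w := by
    refine Prod.ext (funext fun i => ?_) (funext fun j => ?_)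
    · show eta (l * l') * w.1 i = eta l * (eta l' * w.1 i); rw [map_mul, mul_assoc]
    · show l * l' * w.2 j = l * (l' * w.2 j); rw [mul_assoc]

instance instDistribMulActionV (α β : ℕ) : DistribMulAction R2 (V α β) where
  smul_zero l := by
    refine Prod.ext (funext fun i => ?_) (funext fun j => ?_)
    · show eta l * (0 : R1) = 0; simp
    · show l * (0 : R2) = 0; simp
  smul_add l w w' := by
    refine Prod.ext (funext fun i => ?_) (funext fun j => ?_)
    · show eta l * (w.1 i + w'.1 i) = eta l * w.1 i + eta l * w'.1 i; rw [mul_add]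
    · show l * (w.2 j + w'.2 j) = l * w.2 j + l * w'.2 j; rw [mul_add]

/-- `R1^α × R2^β` is an `R2`-module; a `Z2[u]Z2[u,v]`-additive code is an
`R2`-submodule of this module. -/
instance instModuleV (α β : ℕ) : Module R2 (V α β) where
  add_smul l l' w := by
    refine Prod.ext (funext fun i => ?_) (funext fun j => ?_)
    · show eta (l + l') * w.1 i = eta l * w.1 i + eta l' * w.1 i
      rw [map_add, add_mul]
    · show (l + l') * w.2 j = l * w.2 j + l' * w.2 j; rw [add_mul]
  zero_smul w := by
    refine Prod.ext (funext fun i => ?_) (funext fun j => ?_)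
    · show eta 0 * w.1 i = 0; simp
    · show (0 : R2) * w.2 j = 0; simp

/-- The cyclic shift `S` on `R1^α × R2^β`. -/
def shiftS {α β : ℕ} [NeZero α] [NeZero β] (w : V α β) : V α β :=
  (fun i => w.1 (i - 1), fun j => w.2 (j - 1))

/-- The `(1+u, 1+uv)`-constacyclic shift `τ` on `R1^α × R2^β`. -/
def tau {α β : ℕ} [NeZero α] [NeZero β] (w : V α β) : V α β :=
  (fun i => (if i = 0 then 1 + u1 else 1) * w.1 (i - 1),
   fun j => (if j = 0 then 1 + uu * vv else 1) * w.2 (j - 1))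

/-- The inner product on `R1^α × R2^β`:
`⟨x,y⟩ = uv·ι(Σᵢ xᵢyᵢ) + Σⱼ x_{α+j} y_{α+j}` where `ι : R1 → R2` is the
natural inclusion. -/
def innerP {α β : ℕ} (x y : V α β) : R2 :=
  uu * vv * TrivSqZeroExt.inl (∑ i, x.1 i * y.1 i) + ∑ j, x.2 j * y.2 j

/-- The additive dual of a code `C ⊆ R1^α × R2^β`. -/
def dualSet {α β : ℕ} (C : Set (V α β)) : Set (V α β) :=
  {y | ∀ x ∈ C, innerP x y = 0}

instance doubleNeZero (α : ℕ) [NeZero α] : NeZero (α + α) :=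
  ⟨by have := NeZero.ne α; omega⟩

/-- The image space of the Gray map: `Z2^{2α+8β}`, grouped as a block of
`2α` coordinates followed by four blocks of `2β` coordinates. -/
abbrev W (α β : ℕ) :=
  (Fin (α + α) → Z2) × (Fin (β + β) → Z2) × (Fin (β + β) → Z2) ×
    (Fin (β + β) → Z2) × (Fin (β + β) → Z2)

/-- Cyclic shift by one position of a tuple. -/
def cyc {n : ℕ} [NeZero n] {A : Type*} (f : Fin n → A) : Fin n → A :=
  fun i => f (i - 1)

/-- The block-shift permutation `σ` of `Z2^{2α+8β}`: the block of `2α`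
coordinates and each of the four blocks of `2β` coordinates are cyclically
shifted by one position. -/
def sigmaW {α β : ℕ} [NeZero α] [NeZero β] (w : W α β) : W α β :=
  (cyc w.1, cyc w.2.1, cyc w.2.2.1, cyc w.2.2.2.1, cyc w.2.2.2.2)

/-- The Gray map `Φ : R1^α × R2^β → Z2^{2α+8β}`. -/
def Phi {α β : ℕ} (w : V α β) : W α β :=
  let r : Fin α → Z2 := fun i => (w.1 i).fst
  let q : Fin α → Z2 := fun i => (w.1 i).snd
  let a : Fin β → Z2 := fun j => (w.2 j).fst.fst
  let b : Fin β → Z2 := fun j => (w.2 j).fst.snd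
  let c : Fin β → Z2 := fun j => (w.2 j).snd.fst
  let d : Fin β → Z2 := fun j => (w.2 j).snd.snd
  (Fin.append q (fun i => q i + r i),
   Fin.append d (fun j => a j + d j),
   Fin.append (fun j => b j + d j) (fun j => a j + b j + d j),
   Fin.append (fun j => c j + d j) (fun j => a j + c j + d j),
   Fin.append (fun j => b j + c j + d j) (fun j => a j + b j + c j + d j))

/-- Lee weight on `R1`: `w_L(r + uq) = w_H(q, q + r)`. -/
def leeR1 (x : R1) : ℕ :=
  (if x.snd ≠ 0 then 1 else 0) + (if x.snd + x.fst ≠ 0 then 1 else 0)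

/-- Lee weight on `R2`:
`w_L(a+ub+vc+uvd) = w_H(d, a+d, b+d, a+b+d, c+d, a+c+d, b+c+d, a+b+c+d)`. -/
def leeR2 (y : R2) : ℕ :=
  let a := y.fst.fst; let b := y.fst.snd; let c := y.snd.fst; let d := y.snd.snd
  (if d ≠ 0 then 1 else 0) + (if a + d ≠ 0 then 1 else 0) +
  (if b + d ≠ 0 then 1 else 0) + (if a + b + d ≠ 0 then 1 else 0) +
  (if c + d ≠ 0 then 1 else 0) + (if a + c + d ≠ 0 then 1 else 0) +
  (if b + c + d ≠ 0 then 1 else 0) + (if a + b + c + d ≠ 0 then 1 else 0)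

/-- Lee weight on `R1^α × R2^β`: the sum of the Lee weights of the
coordinates. -/
def leeWt {α β : ℕ} (w : V α β) : ℕ :=
  ∑ i, leeR1 (w.1 i) + ∑ j, leeR2 (w.2 j)

/-- Hamming weight on `Z2^{2α+8β}`. -/
def wtW {α β : ℕ} (w : W α β) : ℕ :=
  hammingNorm w.1 + hammingNorm w.2.1 + hammingNorm w.2.2.1 +
    hammingNorm w.2.2.2.1 + hammingNorm w.2.2.2.2

/-- Hamming distance on `Z2^{2α+8β}`. -/
def distW {α β : ℕ} (w w' : W α β) : ℕ :=
  hammingDist w.1 w'.1 + hammingDist w.2.1 w'.2.1 + hammingDist w.2.2.1 w'.2.2.1 +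
    hammingDist w.2.2.2.1 w'.2.2.2.1 + hammingDist w.2.2.2.2 w'.2.2.2.2



/- ### Auxiliary lemmas -/

lemma z2_two : (2 : Z2) = 0 := rfl

lemma val_neg_one' {n : ℕ} [NeZero n] : ((-1 : Fin n)).val = n - 1 := by
  have hn := Nat.one_le_iff_ne_zero.mpr (NeZero.ne n)
  rw [show (-1 : Fin n) = 0 - 1 by rw [zero_sub], Fin.sub_def]
  simp only [Fin.val_one', Fin.val_zero, Nat.add_zero]
  rcases Nat.lt_or_ge 1 n with h | h
  · rw [Nat.mod_eq_of_lt h, Nat.mod_eq_of_lt (by omega)]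
  · have : n = 1 := by omega
    subst this; rfl

lemma sub_one_val {n : ℕ} [NeZero n] (i : Fin n) (h : i ≠ 0) : (i - 1).val = i.val - 1 := by
  have h1 : 1 ≤ i.val := by
    rcases Nat.eq_zero_or_pos i.val with h0 | h0
    · exact absurd (Fin.ext h0) h
    · exact h0
  have hn : 2 ≤ n := by have := i.isLt; omega
  rw [Fin.sub_def]
  simp only [Fin.val_one', Nat.mod_eq_of_lt hn]
  have : n - 1 + i.val = (i.val - 1) + n := by omega
  rw [this, Nat.add_mod_right, Nat.mod_eq_of_lt (by have := i.isLt; omega)]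

lemma val_pos_of_ne {n : ℕ} [NeZero n] {i : Fin n} (h : i ≠ 0) : 1 ≤ i.val := by
  rcases Nat.eq_zero_or_pos i.val with h0 | h0
  · exact absurd (Fin.ext h0) h
  · exact h0

lemma ca_sub {n : ℕ} [NeZero n] (i : Fin n) (h : i ≠ 0) :
    Fin.castAdd n i - 1 = Fin.castAdd n (i - 1) := by
  have h1 := val_pos_of_ne h
  apply Fin.ext
  rw [sub_one_val (Fin.castAdd n i) (by rw [Ne, Fin.ext_iff, Fin.val_castAdd, Fin.val_zero]; omega)]
  simp [sub_one_val i h]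

lemma ca_sub0 {n : ℕ} [NeZero n] :
    Fin.castAdd n (0 : Fin n) - 1 = Fin.natAdd n (-1 : Fin n) := by
  have hn := Nat.one_le_iff_ne_zero.mpr (NeZero.ne n)
  apply Fin.ext
  rw [show Fin.castAdd n (0 : Fin n) - 1 = -1 by
    rw [show Fin.castAdd n (0 : Fin n) = 0 from rfl]; rw [zero_sub]]
  simp [val_neg_one']; omega

lemma na_sub {n : ℕ} [NeZero n] (i : Fin n) (h : i ≠ 0) :
    Fin.natAdd n i - 1 = Fin.natAdd n (i - 1) := by
  have h1 := val_pos_of_ne h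
  have hn := Nat.one_le_iff_ne_zero.mpr (NeZero.ne n)
  apply Fin.ext
  rw [sub_one_val (Fin.natAdd n i) (by rw [Ne, Fin.ext_iff, Fin.val_natAdd, Fin.val_zero]; omega)]
  simp [sub_one_val i h]; omega

lemma na_sub0 {n : ℕ} [NeZero n] :
    Fin.natAdd n (0 : Fin n) - 1 = Fin.castAdd n (-1 : Fin n) := by
  have hn := Nat.one_le_iff_ne_zero.mpr (NeZero.ne n)
  apply Fin.ext
  rw [sub_one_val (Fin.natAdd n (0 : Fin n)) (by simp [Fin.ext_iff]; omega)]
  simp [val_neg_one']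

lemma cyc_append {n : ℕ} [NeZero n] {A : Type*} (f g : Fin n → A) :
    cyc (Fin.append f g) = Fin.append
      (fun i => if i = 0 then g (-1) else f (i - 1))
      (fun i => if i = 0 then f (-1) else g (i - 1)) := by
  funext k
  induction k using Fin.addCases with
  | left i =>
      rw [Fin.append_left]
      by_cases h : i = 0
      · subst h; simp only [cyc, ca_sub0, Fin.append_right]; simp
      · simp only [if_neg h, cyc, ca_sub i h, Fin.append_left]
  | right i =>
      rw [Fin.append_right]
      by_cases h : i = 0
      · subst h; simp only [cyc, na_sub0, Fin.append_left]; simp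
      · simp only [if_neg h, cyc, na_sub i h, Fin.append_right]

/- components of `tau` -/
lemma tau1_fst {α β : ℕ} [NeZero α] [NeZero β] (w : V α β) (i : Fin α) :
    ((tau w).1 i).fst = (w.1 (i - 1)).fst := by
  unfold tau; dsimp only; split_ifs <;> simp [u1]

lemma tau1_snd {α β : ℕ} [NeZero α] [NeZero β] (w : V α β) (i : Fin α) :
    ((tau w).1 i).snd =
      if i = 0 then (w.1 (i - 1)).snd + (w.1 (i - 1)).fst else (w.1 (i - 1)).snd := by
  unfold tau; dsimp only; split_ifs <;> simp [TrivSqZeroExt.snd_mul, u1]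

lemma tau2_a {α β : ℕ} [NeZero α] [NeZero β] (w : V α β) (j : Fin β) :
    ((tau w).2 j).fst.fst = (w.2 (j - 1)).fst.fst := by
  unfold tau; dsimp only; split_ifs <;> simp [TrivSqZeroExt.fst_mul, uu, vv]

lemma tau2_b {α β : ℕ} [NeZero α] [NeZero β] (w : V α β) (j : Fin β) :
    ((tau w).2 j).fst.snd = (w.2 (j - 1)).fst.snd := by
  unfold tau; dsimp only; split_ifs <;> simp [TrivSqZeroExt.fst_mul, uu, vv]

lemma tau2_c {α β : ℕ} [NeZero α] [NeZero β] (w : V α β) (j : Fin β) :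
    ((tau w).2 j).snd.fst = (w.2 (j - 1)).snd.fst := by
  unfold tau; dsimp only; split_ifs <;> simp [TrivSqZeroExt.snd_mul, uu, vv]

lemma tau2_d {α β : ℕ} [NeZero α] [NeZero β] (w : V α β) (j : Fin β) :
    ((tau w).2 j).snd.snd =
      if j = 0 then (w.2 (j - 1)).snd.snd + (w.2 (j - 1)).fst.fst
      else (w.2 (j - 1)).snd.snd := by
  unfold tau; dsimp only; split_ifs <;> simp [TrivSqZeroExt.snd_mul, uu, vv]

/- the key commutation `Φ ∘ τ = σ ∘ Φ` -/
lemma Phi_tau {α β : ℕ} [NeZero α] [NeZero β] (w : V α β) :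
    Phi (tau w) = sigmaW (Phi w) := by
  unfold sigmaW Phi
  simp only [cyc_append]
  refine Prod.ext ?_ (Prod.ext ?_ (Prod.ext ?_ (Prod.ext ?_ ?_))) <;>
  · dsimp only
    funext k
    induction k using Fin.addCases with
    | left i =>
        rw [Fin.append_left, Fin.append_left]
        by_cases h : i = 0 <;>
          simp only [h, if_pos, if_neg, tau1_fst, tau1_snd, tau2_a, tau2_b, tau2_c, tau2_d,
            zero_sub, if_true, ite_true, reduceIte] <;>
          ring_nf <;> simp [z2_two]
    | right i =>
        rw [Fin.append_right, Fin.append_right]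
        by_cases h : i = 0 <;>
          simp only [h, if_pos, if_neg, tau1_fst, tau1_snd, tau2_a, tau2_b, tau2_c, tau2_d,
            zero_sub, if_true, ite_true, reduceIte] <;>
          ring_nf <;> simp [z2_two]

/- weight lemmas -/
lemma hn_append {n : ℕ} (f g : Fin n → Z2) :
    hammingNorm (Fin.append f g) = hammingNorm f + hammingNorm g := by
  simp only [hammingNorm, Finset.card_filter, Fin.sum_univ_add, Fin.append_left,
    Fin.append_right]

lemma hn_sum {n : ℕ} (f : Fin n → Z2) :
    hammingNorm f = ∑ i, if f i ≠ 0 then 1 else 0 := by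
  simp only [hammingNorm, Finset.card_filter]

lemma wt_Phi {α β : ℕ} (w : V α β) : wtW (Phi w) = leeWt w := by
  simp only [wtW, Phi, hn_append]
  simp only [hn_sum, leeWt, leeR1, leeR2, Finset.sum_add_distrib]
  ring

lemma Phi_sub {α β : ℕ} (w w' : V α β) : Phi (w - w') = Phi w - Phi w' := by
  refine Prod.ext ?_ (Prod.ext ?_ (Prod.ext ?_ (Prod.ext ?_ ?_))) <;>
  · funext k
    induction k using Fin.addCases with
    | left i =>
        simp only [Phi, Prod.fst_sub, Prod.snd_sub, Pi.sub_apply, Fin.append_left,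
          TrivSqZeroExt.fst_sub, TrivSqZeroExt.snd_sub]
        try ring
    | right i =>
        simp only [Phi, Prod.fst_sub, Prod.snd_sub, Pi.sub_apply, Fin.append_right,
          TrivSqZeroExt.fst_sub, TrivSqZeroExt.snd_sub]
        try ring

/-- The Gray image of a `(1+u,1+uv)`-additive constacyclic code
is invariant under the block-shift permutation `σ`, and the Gray map is
distance invariant on the code. -/
theorem gray_image_constacyclic_shift_invariant_and_distance_invariant
    (α β : ℕ) [NeZero α] [NeZero β] (C : Submodule R2 (V α β))
    (hC : tau '' (C : Set (V α β)) = (C : Set (V α β))) :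
    sigmaW '' (Phi '' (C : Set (V α β))) = Phi '' (C : Set (V α β)) ∧
      ∀ c ∈ C, ∀ c' ∈ C, distW (Phi c) (Phi c') = leeWt (c - c') := by
  constructor
  · calc sigmaW '' (Phi '' (C : Set (V α β)))
        = (fun x => sigmaW (Phi x)) '' (C : Set (V α β)) := Set.image_image _ _ _
      _ = (fun x => Phi (tau x)) '' (C : Set (V α β)) := by
          simp only [Phi_tau]
      _ = Phi '' (tau '' (C : Set (V α β))) := (Set.image_image _ _ _).symm
      _ = Phi '' (C : Set (V α β)) := by rw [hC]
  · intro c _ c' _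
    have h1 : distW (Phi c) (Phi c') = wtW (Phi c - Phi c') := by
      simp only [distW, wtW, hammingDist, hammingNorm, Prod.fst_sub, Prod.snd_sub, Pi.sub_apply,
        sub_ne_zero]
    rw [h1, ← Phi_sub, wt_Phi]

end
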